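/- All return substitutions of a primitive substitution have the same non-zero eigenvalues: for any two prefixes u, v of the fixed point X of a primitive substitution τ, the incidence matrices of τ_u and τ_v have the same non-zero eigenvalues. -/

import Mathlib

namespace Cobham

open Filter

variable {A : Type*} {B : Type*}

/-- The factor `X_i X_{i+1} ... X_{i+n-1}` of the sequence `X`. -/
def word (X : ℕ → A) (i n : ℕ) : List A := (List.range n).map fun k => X (i + k)

/-- `u` occurs in `X` at position `i`. -/
def OccursAt (X : ℕ → A) (u : List A) (i : ℕ) : Prop := word X i u.length = u

def IsFactor (X : ℕ → A) (u : List A) : Prop := ∃ i, OccursAt X u i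

def IsPrefix (X : ℕ → A) (u : List A) : Prop := OccursAt X u 0

/-- Uniformly recurrent: gaps between successive occurrences of any factor are bounded. -/
def UnifRec (X : ℕ → A) : Prop :=
  ∀ u, IsFactor X u → ∃ g : ℕ, ∀ i : ℕ, ∃ j, i ≤ j ∧ j ≤ i + g ∧ OccursAt X u j

/-- Return words on `u`: factors between two successive occurrences of `u` in `X`. -/
def ReturnWords (X : ℕ → A) (u : List A) : Set (List A) :=
  { v | ∃ i j, OccursAt X u i ∧ OccursAt X u j ∧ i < j ∧
      (∀ k, i < k → k < j → ¬ OccursAt X u k) ∧ v = word X i (j - i) }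

/-- Application of a morphism to a word, by concatenation. -/
def wordApply (σ : A → List B) (w : List A) : List B := w.flatMap σ

/-- Iterate of a morphism. -/
def mPow (σ : A → List A) : ℕ → A → List A
  | 0 => fun a => [a]
  | k + 1 => fun a => wordApply σ (mPow σ k a)

def Nonerasing (σ : A → List A) : Prop := ∀ a, σ a ≠ []

/-- Primitivity: some power of the morphism maps every letter to a word
containing every letter. -/
def Primitive (σ : A → List A) : Prop := ∃ k, 0 < k ∧ ∀ a b : A, b ∈ mPow σ k a

/-- Primitivity restricted to a set of letters. -/
def PrimitiveOn (σ : A → List A) (S : Set A) : Prop :=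
  ∃ k, 0 < k ∧ ∀ a ∈ S, ∀ b ∈ S, b ∈ mPow σ k a

/-- `X` is a fixed point of `σ`: the image of every prefix of `X` is a prefix of `X`. -/
def IsFixedPt (σ : A → List A) (X : ℕ → A) : Prop :=
  ∀ n, OccursAt X (wordApply σ (word X 0 n)) 0

def UltPeriodic (X : ℕ → A) : Prop :=
  ∃ N p : ℕ, 0 < p ∧ ∀ n, N ≤ n → X (n + p) = X n

def Periodic (X : ℕ → A) : Prop := ∃ p : ℕ, 0 < p ∧ ∀ n, X (n + p) = X n

/-- `u` occurs at position `i` inside the word `w`. -/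
def WOcc (u w : List A) (i : ℕ) : Prop :=
  i + u.length ≤ w.length ∧ (w.drop i).take u.length = u

/-- `D` is the derived sequence of `X` on `u`: a sequence of return words on `u`
whose concatenation is `X`. -/
def IsDerived (X : ℕ → A) (u : List A) (D : ℕ → List A) : Prop :=
  (∀ n, D n ∈ ReturnWords X u) ∧ ∀ n, OccursAt X ((word D 0 n).flatten) 0

/-- `τu` is the return substitution of `τ` on `u` (on the alphabet of return words):
`Θ_u ∘ τ_u = τ ∘ Θ_u`. -/
def RetSub (τ : A → List A) (X : ℕ → A) (u : List A)
    (τu : List A → List (List A)) : Prop :=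
  ∀ r ∈ ReturnWords X u,
    (∀ s ∈ τu r, s ∈ ReturnWords X u) ∧ (τu r).flatten = wordApply τ r

/-- Eigenvalue of a complex matrix. -/
def IsEig {n : Type*} [Fintype n] (M : Matrix n n ℂ) (μ : ℂ) : Prop :=
  ∃ v : n → ℂ, v ≠ 0 ∧ M.mulVec v = μ • v

/-- Incidence matrix of a morphism, as a complex matrix. -/
def incMat [Fintype A] [DecidableEq A] (σ : A → List A) : Matrix A A ℂ :=
  Matrix.of fun i j => (((σ j).count i : ℕ) : ℂ)

/-- Incidence matrix of a return substitution, indexed by the set of return words. -/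
def retMat [DecidableEq A] (τu : List A → List (List A)) (S : Set (List A))
    [Fintype S] : Matrix S S ℂ :=
  Matrix.of fun i j => (((τu (j : List A)).count (i : List A) : ℕ) : ℂ)

/-- `α` is the dominant eigenvalue of the incidence matrix of `σ`. -/
def IsDomEig [Fintype A] [DecidableEq A] (σ : A → List A) (α : ℝ) : Prop :=
  IsEig (incMat σ) (α : ℂ) ∧ ∀ μ : ℂ, IsEig (incMat σ) μ → ‖μ‖ ≤ α

/-- `X` is `α`-substitutive: the image under a letter-to-letter morphism of the
fixed point of a primitive substitution with dominant eigenvalue `α`. -/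
def IsSubstitutiveWith {A : Type*} (α : ℝ) (X : ℕ → A) : Prop :=
  ∃ (C : Type) (hF : Fintype C) (hD : DecidableEq C) (σ : C → List C) (c : C)
    (Y : ℕ → C) (ψ : C → A),
    Nonerasing σ ∧ (σ c).head? = some c ∧ Primitive σ ∧
    Y 0 = c ∧ IsFixedPt σ Y ∧ (∀ n, X n = ψ (Y n)) ∧ @IsDomEig C hF hD σ α

/-- Perron number: a real algebraic integer `α ≥ 1` strictly dominating the
absolute values of its other conjugates. -/
def IsPerron (α : ℝ) : Prop :=
  1 ≤ α ∧ IsIntegral ℤ α ∧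
    ∀ β : ℂ, Polynomial.aeval β (minpoly ℤ α) = 0 → β ≠ (α : ℂ) → ‖β‖ < α

variable {X : ℕ → A} {u : List A}

section WordLemmas

@[simp] lemma word_length (X : ℕ → A) (i n : ℕ) : (word X i n).length = n := by
  simp [word]

@[simp] lemma word_zero (X : ℕ → A) (i : ℕ) : word X i 0 = [] := by simp [word]

lemma word_append (X : ℕ → A) (i m k : ℕ) :
    word X i (m + k) = word X i m ++ word X (i + m) k := by
  simp only [word, List.range_add, List.map_append, List.map_map]
  congr 1
  apply List.map_congr_left
  intro x _
  simp [Function.comp, Nat.add_assoc, Nat.add_comm, Nat.add_left_comm]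

lemma word_take (X : ℕ → A) (i : ℕ) {m n : ℕ} (h : m ≤ n) :
    (word X i n).take m = word X i m := by
  obtain ⟨k, rfl⟩ := Nat.exists_eq_add_of_le h
  rw [word_append]
  exact List.take_left' (by simp)

lemma word_drop (X : ℕ → A) (i : ℕ) {m n : ℕ} (h : m ≤ n) :
    (word X i n).drop m = word X (i + m) (n - m) := by
  obtain ⟨k, rfl⟩ := Nat.exists_eq_add_of_le h
  rw [word_append]
  have h2 : List.drop m (word X i m ++ word X (i+m) k) = word X (i+m) k := by
    have : List.drop (word X i m).length (word X i m ++ word X (i+m) k) = word X (i+m) k :=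
      List.drop_left
    rwa [word_length] at this
  rw [h2]
  simp

lemma occursAt_iff {w : List A} {i : ℕ} : OccursAt X w i ↔ word X i w.length = w :=
  Iff.rfl

lemma occursAt_of_prefix {w p : List A} {i : ℕ} (hw : OccursAt X w i)
    (hp : p <+: w) : OccursAt X p i := by
  obtain ⟨t, rfl⟩ := hp
  have hlen : p.length ≤ (p ++ t).length := by simp
  have : word X i p.length = (word X i (p ++ t).length).take p.length :=
    (word_take X i hlen).symm
  rw [occursAt_iff, this, hw, List.take_left]

lemma prefix_of_prefix_le {w p : List A} (hw : IsPrefix X w) (hp : IsPrefix X p)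
    (h : p.length ≤ w.length) : p <+: w := by
  have hw' : word X 0 w.length = w := hw
  have hp' : word X 0 p.length = p := hp
  have : w.take p.length = p := by
    rw [← hw', word_take X 0 h, hp']
  exact this ▸ List.take_prefix _ _

end WordLemmas
section WOccLemmas

lemma wocc_word_iff {w : List A} {i N p : ℕ} (h : p + w.length ≤ N) :
    WOcc w (word X i N) p ↔ OccursAt X w (i + p) := by
  have hpN : p ≤ N := le_trans (Nat.le_add_right _ _) h
  have hd : (word X i N).drop p = word X (i + p) (N - p) := word_drop X i hpN
  have ht : (word X (i + p) (N - p)).take w.length = word X (i + p) w.length :=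
    word_take X (i + p) (by omega)
  constructor
  · rintro ⟨-, h2⟩
    rw [hd, ht] at h2
    exact h2
  · intro h2
    refine ⟨by simpa using h, ?_⟩
    rw [hd, ht]
    exact h2

lemma wocc_take {w W : List A} {p N : ℕ} (h : WOcc w W p) (hN : p + w.length ≤ N) :
    WOcc w (W.take N) p := by
  obtain ⟨h1, h2⟩ := h
  constructor
  · simp only [List.length_take]
    omega
  · rw [List.drop_take, List.take_take, min_eq_left (by omega : w.length ≤ N - p)]
    exact h2

end WOccLemmas

section RetLemmas

lemma ret_ne_nil {r : List A} (hr : r ∈ ReturnWords X u) : r ≠ [] := by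
  obtain ⟨i, j, _, _, hij, _, rfl⟩ := hr
  intro h
  have := congrArg List.length h
  simp at this
  omega

lemma ret_prefix_append {r : List A} (hr : r ∈ ReturnWords X u) : u <+: r ++ u := by
  obtain ⟨i, j, hi, hj, hij, _, rfl⟩ := hr
  have hj' : word X j u.length = u := hj
  have hru : word X i (j - i) ++ u = word X i ((j - i) + u.length) := by
    rw [word_append]
    have hij' : i + (j - i) = j := by omega
    rw [hij', hj']
  rw [hru]
  have h3 : (word X i ((j - i) + u.length)).take u.length = u := by
    rw [word_take X i (by omega)]
    exact hi
  exact List.prefix_iff_eq_take.mpr h3.symm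

lemma ret_no_internal {r : List A} (hr : r ∈ ReturnWords X u) :
    ∀ p, 0 < p → p < r.length → ¬ WOcc u (r ++ u) p := by
  obtain ⟨i, j, hi, hj, hij, hbet, rfl⟩ := hr
  intro p hp0 hpr hw
  have hlen : (word X i (j - i)).length = j - i := word_length _ _ _
  rw [hlen] at hpr
  have hj' : word X j u.length = u := hj
  have hru : word X i (j - i) ++ u = word X i ((j - i) + u.length) := by
    rw [word_append]
    have hij' : i + (j - i) = j := by omega
    rw [hij', hj']
  rw [hru] at hw
  have := (wocc_word_iff (by omega)).mp hw
  exact hbet (i + p) (by omega) (by omega) this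

/-- `u` is a prefix of `l.flatten ++ u` when every element has this property. -/
lemma prefix_flatten_append {l : List (List A)}
    (h : ∀ x ∈ l, u <+: x ++ u) : u <+: l.flatten ++ u := by
  induction l with
  | nil => simp
  | cons x t ih =>
    have hx := h x (by simp)
    have ht := ih (fun y hy => h y (List.mem_cons_of_mem _ hy))
    obtain ⟨z, hz⟩ := ht
    rw [List.flatten_cons, List.append_assoc, ← hz, ← List.append_assoc]
    exact hx.trans (List.prefix_append _ _)

lemma head_eq_of_le {r s c b : List A} (hr : r ∈ ReturnWords X u)
    (hs : s ∈ ReturnWords X u) (hc : u <+: c) (hb : u <+: b)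
    (heq : r ++ c = s ++ b) (hle : r.length ≤ s.length) : r = s := by
  rcases Nat.lt_or_ge r.length s.length with hlt | hge
  · exfalso
    have hWr : (s ++ b).drop r.length = c := by
      rw [← heq, List.drop_left]
    have hblen : u.length ≤ b.length := hb.length_le
    have hwocc : WOcc u (s ++ b) r.length := by
      constructor
      · simp only [List.length_append]; omega
      · rw [hWr]
        obtain ⟨z, hz⟩ := hc
        rw [← hz, List.take_left]
    have htake : (s ++ b).take (s.length + u.length) = s ++ u := by
      rw [List.take_append]
      congr 1
      · exact List.take_of_length_le (by omega)
      obtain ⟨z, hz⟩ := hb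
      rw [← hz, Nat.add_sub_cancel_left, List.take_left]
    have hwocc2 : WOcc u (s ++ u) r.length := by
      have := wocc_take hwocc (N := s.length + u.length) (by omega)
      rwa [htake] at this
    have hr0 : 0 < r.length := List.length_pos_iff.mpr (ret_ne_nil hr)
    exact ret_no_internal hs r.length hr0 hlt hwocc2
  · have : r.length = s.length := le_antisymm hle hge
    have h1 : (r ++ c).take r.length = r := List.take_left
    have h2 : (s ++ b).take s.length = s := List.take_left
    rw [heq, this, h2] at h1
    exact h1.symm

/-- Uniqueness of decomposition into return words. -/
lemma dec_unique : ∀ (l1 l2 : List (List A)),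
    (∀ r ∈ l1, r ∈ ReturnWords X u) → (∀ r ∈ l2, r ∈ ReturnWords X u) →
    l1.flatten = l2.flatten → l1 = l2 := by
  intro l1
  induction l1 with
  | nil =>
    intro l2 _ h2 hfl
    cases l2 with
    | nil => rfl
    | cons s t =>
      exfalso
      have := ret_ne_nil (h2 s (by simp))
      simp only [List.flatten_nil, List.flatten_cons] at hfl
      exact this (List.append_eq_nil_iff.mp hfl.symm).1
  | cons r t1 ih =>
    intro l2 h1 h2 hfl
    cases l2 with
    | nil =>
      exfalso
      have := ret_ne_nil (h1 r (by simp))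
      simp only [List.flatten_cons, List.flatten_nil] at hfl
      exact this (List.append_eq_nil_iff.mp hfl).1
    | cons s t2 =>
      simp only [List.flatten_cons] at hfl
      have hrret := h1 r (by simp)
      have hsret := h2 s (by simp)
      have hc : u <+: t1.flatten ++ u :=
        prefix_flatten_append (fun x hx => ret_prefix_append (h1 x (List.mem_cons_of_mem _ hx)))
      have hb : u <+: t2.flatten ++ u :=
        prefix_flatten_append (fun x hx => ret_prefix_append (h2 x (List.mem_cons_of_mem _ hx)))
      have heq : r ++ (t1.flatten ++ u) = s ++ (t2.flatten ++ u) := by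
        rw [← List.append_assoc, ← List.append_assoc, hfl]
      have hrs : r = s := by
        rcases le_total r.length s.length with h | h
        · exact head_eq_of_le hrret hsret hc hb heq h
        · exact (head_eq_of_le hsret hrret hb hc heq.symm h).symm
      subst hrs
      have hft : t1.flatten = t2.flatten := by
        have := heq
        rw [List.append_cancel_left_eq] at this
        exact List.append_cancel_right this
      rw [ih t2 (fun x hx => h1 x (List.mem_cons_of_mem _ hx))
        (fun x hx => h2 x (List.mem_cons_of_mem _ hx)) hft]

/-- Existence of decomposition between two occurrences. -/
lemma dec_exists : ∀ (d p : ℕ), OccursAt X u p → OccursAt X u (p + d) →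
    ∃ l : List (List A), (∀ r ∈ l, r ∈ ReturnWords X u) ∧ l.flatten = word X p d := by
  intro d
  induction d using Nat.strong_induction_on with
  | _ d ih =>
    intro p hp hpd
    rcases Nat.eq_zero_or_pos d with rfl | hd0
    · exact ⟨[], by simp, by simp⟩
    · classical
      have hex : ∃ m, 0 < m ∧ m ≤ d ∧ OccursAt X u (p + m) := ⟨d, hd0, le_refl _, hpd⟩
      set m := Nat.find hex with hm
      obtain ⟨hm0, hmd, hocc⟩ := Nat.find_spec hex
      have hret : word X p m ∈ ReturnWords X u := by
        refine ⟨p, p + m, hp, hocc, by omega, ?_, by simp⟩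
        intro k hk1 hk2 hkocc
        have hk : k - p < m := by omega
        exact Nat.find_min hex hk ⟨by omega, by omega, by
          have : p + (k - p) = k := by omega
          rwa [this]⟩
      obtain ⟨l', hl'1, hl'2⟩ := ih (d - m) (by omega) (p + m) hocc
        (by have : p + m + (d - m) = p + d := by omega
            rwa [this])
      refine ⟨word X p m :: l', ?_, ?_⟩
      · intro x hx
        rcases List.mem_cons.mp hx with rfl | hx'
        · exact hret
        · exact hl'1 x hx'
      · simp only [List.flatten_cons, hl'2]
        rw [← word_append]
        congr 1
        omega

end RetLemmas
section MorphLemmas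

variable {τ : A → List A}

@[simp] lemma wordApply_nil (σ : A → List B) : wordApply σ [] = [] := rfl

lemma wordApply_append (σ : A → List B) (w w' : List A) :
    wordApply σ (w ++ w') = wordApply σ w ++ wordApply σ w' :=
  List.flatMap_append

lemma wordApply_id (w : List A) : wordApply (fun b => [b]) w = w := by
  simp [wordApply]

@[simp] lemma mPow_zero (σ : A → List A) (b : A) : mPow σ 0 b = [b] := rfl

lemma wordApply_mPow_zero (σ : A → List A) (w : List A) :
    wordApply (mPow σ 0) w = w := wordApply_id w

lemma wordApply_wordApply (σ ρ : A → List A) (w : List A) :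
    wordApply σ (wordApply ρ w) = wordApply (fun b => wordApply σ (ρ b)) w :=
  List.flatMap_assoc

lemma mPow_succ' (σ : A → List A) (k : ℕ) (b : A) :
    mPow σ (k + 1) b = wordApply (mPow σ k) (σ b) := by
  induction k generalizing b with
  | zero => simp [mPow, wordApply_mPow_zero, wordApply, List.flatMap_singleton]
  | succ k ih =>
    show wordApply σ (mPow σ (k+1) b) = _
    rw [ih b, wordApply_wordApply]
    rfl

lemma wordApply_mPow_succ' (σ : A → List A) (k : ℕ) (w : List A) :
    wordApply (mPow σ (k + 1)) w = wordApply (mPow σ k) (wordApply σ w) := by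
  rw [wordApply_wordApply]
  congr 1
  funext b
  exact mPow_succ' σ k b

lemma wordApply_flatten (σ : A → List B) (l : List (List A)) :
    wordApply σ l.flatten = l.flatMap (wordApply σ) := by
  induction l with
  | nil => rfl
  | cons x t ih => rw [List.flatten_cons, wordApply_append, ih]; rfl

lemma flatten_flatMap_eq {l : List (List A)} {f : List A → List (List B)}
    {g : List A → List B} (h : ∀ x ∈ l, (f x).flatten = g x) :
    (l.flatMap f).flatten = l.flatMap g := by
  induction l with
  | nil => rfl
  | cons x t ih =>
    rw [List.flatMap_cons, List.flatMap_cons, List.flatten_append,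
      h x (by simp), ih (fun y hy => h y (List.mem_cons_of_mem _ hy))]

end MorphLemmas
section FixLemmas

variable {τ : A → List A}

/-- Images of prefixes under powers of `τ` are prefixes. -/
lemma mpow_prefix (hfix : IsFixedPt τ X) (k m : ℕ) :
    word X 0 (wordApply (mPow τ k) (word X 0 m)).length
      = wordApply (mPow τ k) (word X 0 m) := by
  induction k with
  | zero => rw [wordApply_mPow_zero, word_length]
  | succ k ih =>
    have hc : wordApply (mPow τ (k+1)) (word X 0 m)
        = wordApply τ (wordApply (mPow τ k) (word X 0 m)) :=
      (wordApply_wordApply τ (mPow τ k) _).symm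
    rw [hc, ← ih]
    exact hfix _

/-- The image of a factor between positions `i ≤ j` under `τ^k`. -/
lemma image_seg (hfix : IsFixedPt τ X) (k : ℕ) {i j : ℕ} (hij : i ≤ j) :
    (wordApply (mPow τ k) (word X 0 i)).length
      ≤ (wordApply (mPow τ k) (word X 0 j)).length ∧
    word X (wordApply (mPow τ k) (word X 0 i)).length
        ((wordApply (mPow τ k) (word X 0 j)).length
          - (wordApply (mPow τ k) (word X 0 i)).length)
      = wordApply (mPow τ k) (word X i (j - i)) := by
  set F := wordApply (mPow τ k) with hF
  have hsplit : word X 0 j = word X 0 i ++ word X i (j - i) := by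
    have : i + (j - i) = j := by omega
    rw [← this, word_append]
    simp [Nat.add_sub_cancel_left]
  have hFsplit : F (word X 0 j) = F (word X 0 i) ++ F (word X i (j - i)) := by
    rw [hsplit]; exact wordApply_append _ _ _
  have hlen : (F (word X 0 j)).length
      = (F (word X 0 i)).length + (F (word X i (j - i))).length := by
    rw [hFsplit, List.length_append]
  constructor
  · omega
  · have h1 := mpow_prefix (X := X) hfix k j
    have h2 := mpow_prefix (X := X) hfix k i
    rw [← hF] at h1 h2
    have hd : (F (word X 0 j)).length - (F (word X 0 i)).length
        = (F (word X i (j - i))).length := by omega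
    rw [hd]
    have h3 : word X 0 ((F (word X 0 i)).length + (F (word X i (j - i))).length)
        = word X 0 (F (word X 0 i)).length
          ++ word X ((F (word X 0 i)).length) ((F (word X i (j - i))).length) := by
      rw [word_append, Nat.zero_add]
    rw [← hlen, h1, hFsplit, h2] at h3
    exact (List.append_cancel_left h3).symm

/-- `τ^k` maps occurrences to occurrences. -/
lemma occ_image (hfix : IsFixedPt τ X) (k : ℕ) {w : List A} {i : ℕ}
    (hw : OccursAt X w i) :
    OccursAt X (wordApply (mPow τ k) w)
      (wordApply (mPow τ k) (word X 0 i)).length := by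
  have hw' : word X i w.length = w := hw
  have := (image_seg (X := X) hfix k (i := i) (j := i + w.length) (by omega)).2
  have hred : i + w.length - i = w.length := by omega
  rw [hred, hw'] at this
  have hlen : (wordApply (mPow τ k) (word X 0 (i + w.length))).length
      = (wordApply (mPow τ k) (word X 0 i)).length
        + (wordApply (mPow τ k) w).length := by
    have hsplit : word X 0 (i + w.length) = word X 0 i ++ w := by
      rw [word_append, Nat.zero_add, hw']
    rw [hsplit, wordApply_append, List.length_append]
  have hred2 : (wordApply (mPow τ k) (word X 0 (i + w.length))).length
      - (wordApply (mPow τ k) (word X 0 i)).length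
      = (wordApply (mPow τ k) w).length := by omega
  rw [hred2] at this
  exact this

end FixLemmas
section CountLemmas

variable [DecidableEq A]

lemma count_flatMap {S : Set (List A)} [Fintype S] (f : List A → List (List A))
    (l : List (List A)) (hl : ∀ x ∈ l, x ∈ S) (s : List A) :
    (((l.flatMap f).count s : ℕ) : ℂ)
      = ∑ t : S, ((l.count (t : List A) : ℕ) : ℂ) * (((f (t : List A)).count s : ℕ) : ℂ) := by
  induction l with
  | nil => simp
  | cons x t ih =>
    have hx : x ∈ S := hl x (by simp)
    have ih' := ih (fun y hy => hl y (List.mem_cons_of_mem _ hy))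
    rw [List.flatMap_cons, List.count_append]
    push_cast
    rw [ih']
    have hcnt : ∀ w : S, (((x :: t).count (w : List A) : ℕ) : ℂ)
        = ((t.count (w : List A) : ℕ) : ℂ) + (if w = (⟨x, hx⟩ : S) then 1 else 0) := by
      intro w
      rw [List.count_cons]
      push_cast
      congr 1
      by_cases hw : w = (⟨x, hx⟩ : S)
      · subst hw
        simp
      · have hxw : (x == (w : List A)) = false := by
          rw [beq_eq_false_iff_ne]
          exact fun hc => hw (Subtype.ext hc.symm)
        simp [hw, hxw]
    have hsum : ∑ w : S, (((x :: t).count (w : List A) : ℕ) : ℂ) * (((f (w : List A)).count s : ℕ) : ℂ)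
        = (∑ w : S, ((t.count (w : List A) : ℕ) : ℂ) * (((f (w : List A)).count s : ℕ) : ℂ))
          + (((f x).count s : ℕ) : ℂ) := by
      rw [Finset.sum_congr rfl (fun w _ => by rw [hcnt w, add_mul])]
      rw [Finset.sum_add_distrib]
      congr 1
      have : ∀ w : S, (if w = (⟨x, hx⟩ : S) then (1:ℂ) else 0) * (((f (w : List A)).count s : ℕ) : ℂ)
          = if w = (⟨x, hx⟩ : S) then (((f (w : List A)).count s : ℕ) : ℂ) else 0 := by
        intro w
        split_ifs <;> simp
      rw [Finset.sum_congr rfl (fun w _ => this w),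
        Finset.sum_ite_eq' Finset.univ (⟨x, hx⟩ : S)
          (fun w => (((f (w : List A)).count s : ℕ) : ℂ)),
        if_pos (Finset.mem_univ _)]
    rw [hsum]
    ring

end CountLemmas
section TpowLemmas

variable [DecidableEq A] {τ : A → List A}

/-- Iterated application of a return substitution at the level of lists of words. -/
def Tpow (σS : List A → List (List A)) : ℕ → List A → List (List A)
  | 0, w => [w]
  | k + 1, w => (σS w).flatMap (Tpow σS k)

variable {S : Set (List A)} [Fintype S] {σS : List A → List (List A)}

lemma Tpow_mem (hS : ∀ w ∈ S, ∀ x ∈ σS w, x ∈ S) :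
    ∀ k, ∀ w ∈ S, ∀ x ∈ Tpow σS k w, x ∈ S := by
  intro k
  induction k with
  | zero =>
    intro w hw x hx
    simp only [Tpow, List.mem_singleton] at hx
    exact hx ▸ hw
  | succ k ih =>
    intro w hw x hx
    simp only [Tpow, List.mem_flatMap] at hx
    obtain ⟨y, hy, hxy⟩ := hx
    exact ih y (hS w hw y hy) x hxy

lemma Tpow_flatten (hS : ∀ w ∈ S, ∀ x ∈ σS w, x ∈ S)
    (hfl : ∀ w ∈ S, (σS w).flatten = wordApply τ w) :
    ∀ k, ∀ w ∈ S, (Tpow σS k w).flatten = wordApply (mPow τ k) w := by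
  intro k
  induction k with
  | zero =>
    intro w hw
    simp [Tpow, wordApply_mPow_zero]
  | succ k ih =>
    intro w hw
    show ((σS w).flatMap (Tpow σS k)).flatten = _
    rw [flatten_flatMap_eq (fun x hx => ih x (hS w hw x hx))]
    rw [← wordApply_flatten, hfl w hw, ← wordApply_mPow_succ']

lemma retMat_pow (hS : ∀ w ∈ S, ∀ x ∈ σS w, x ∈ S) :
    ∀ k (s r : S), ((retMat σS S) ^ k) s r = (((Tpow σS k (r : List A)).count (s : List A) : ℕ) : ℂ) := by
  intro k
  induction k with
  | zero =>
    intro s r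
    rw [pow_zero, Matrix.one_apply]
    show _ = (((([(r : List A)]).count (s : List A) : ℕ) : ℂ))
    rw [List.count_singleton]
    by_cases h : s = r
    · subst h
      simp
    · have : ((r : List A) == (s : List A)) = false := by
        rw [beq_eq_false_iff_ne]
        exact fun hc => h (Subtype.ext hc.symm)
      simp [h, this]
  | succ k ih =>
    intro s r
    rw [pow_succ, Matrix.mul_apply]
    have : ∀ t : S, ((retMat σS S) ^ k) s t * (retMat σS S) t r
        = (((σS (r : List A)).count (t : List A) : ℕ) : ℂ)
          * (((Tpow σS k (t : List A)).count (s : List A) : ℕ) : ℂ) := by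
      intro t
      rw [ih s t]
      show _ = _
      rw [mul_comm]
      rfl
    rw [Finset.sum_congr rfl (fun t _ => this t)]
    show _ = (((((σS (r : List A)).flatMap (Tpow σS k)).count (s : List A) : ℕ) : ℂ))
    rw [count_flatMap (S := S) (Tpow σS k) (σS (r : List A)) (hS r r.2) (s : List A)]

end TpowLemmas
section Helpers

lemma wordApply_mPow_succ (σ : A → List A) (k : ℕ) (w : List A) :
    wordApply (mPow σ (k + 1)) w = wordApply σ (wordApply (mPow σ k) w) :=
  (wordApply_wordApply σ (mPow σ k) w).symm

lemma mPow_head {τ : A → List A} {a : A} {t0 : List A} (h : τ a = a :: t0) :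
    ∀ k, ∃ t', mPow τ k a = a :: t' := by
  intro k
  induction k with
  | zero => exact ⟨[], rfl⟩
  | succ k ih =>
    obtain ⟨t', ht'⟩ := ih
    show ∃ t'', wordApply τ (mPow τ k a) = a :: t''
    rw [ht']
    show ∃ t'', (a :: t').flatMap τ = a :: t''
    rw [List.flatMap_cons, h]
    exact ⟨t0 ++ t'.flatMap τ, rfl⟩

lemma length_le_flatMap {τ : A → List A} (hne : Nonerasing τ) (l : List A) :
    l.length ≤ (l.flatMap τ).length := by
  induction l with
  | nil => simp
  | cons x t ih =>
    rw [List.flatMap_cons, List.length_append, List.length_cons]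
    have : 1 ≤ (τ x).length := List.length_pos_iff.mpr (hne x)
    omega

lemma mPow_length_ge {τ : A → List A} {a : A} {b : A} {t0 : List A}
    (hne : Nonerasing τ) (h : τ a = a :: b :: t0) :
    ∀ k, k + 1 ≤ (mPow τ k a).length := by
  intro k
  induction k with
  | zero => simp
  | succ k ih =>
    obtain ⟨t', ht'⟩ := mPow_head (t0 := b :: t0) h k
    show k + 2 ≤ (wordApply τ (mPow τ k a)).length
    rw [ht']
    show k + 2 ≤ ((a :: t').flatMap τ).length
    rw [List.flatMap_cons, List.length_append, h]
    have h1 : t'.length ≤ (t'.flatMap τ).length := length_le_flatMap hne t'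
    have h2 : k ≤ t'.length := by
      have := ih
      rw [ht'] at this
      simp at this
      omega
    simp only [List.length_cons]
    omega

lemma sum_count_eq [DecidableEq A] {T : Set (List A)} [Fintype T]
    (f : List A → List (List A)) (l : List (List A)) (hl : ∀ x ∈ l, x ∈ T)
    (s : List A) :
    ∑ t : T, (((f (t : List A)).count s : ℕ) : ℂ) * ((l.count (t : List A) : ℕ) : ℂ)
      = (((l.flatMap f).count s : ℕ) : ℂ) := by
  rw [count_flatMap f l hl s]
  exact Finset.sum_congr rfl fun t _ => mul_comm _ _

lemma mulVec_pow_eig {ι : Type*} [Fintype ι] [DecidableEq ι] (M : Matrix ι ι ℂ)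
    (x : ι → ℂ) (μ : ℂ) (h : M.mulVec x = μ • x) :
    ∀ n, (M ^ n).mulVec x = μ ^ n • x := by
  intro n
  induction n with
  | zero => simp [Matrix.one_mulVec]
  | succ n ih =>
    rw [pow_succ, ← Matrix.mulVec_mulVec, h, Matrix.mulVec_smul, ih,
      smul_smul, pow_succ, mul_comm]

lemma eig_transfer {ι κ : Type*} [Fintype ι] [Fintype κ] [DecidableEq ι] [DecidableEq κ]
    (M : Matrix ι ι ℂ) (N : Matrix κ κ ℂ) (P : Matrix κ ι ℂ) (Q : Matrix ι κ ℂ)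
    (n : ℕ) (h1 : P * M = N * P) (h2 : Q * P = M ^ n)
    {μ : ℂ} (hμ : μ ≠ 0) : IsEig M μ → IsEig N μ := by
  rintro ⟨x, hx, hMx⟩
  refine ⟨P.mulVec x, ?_, ?_⟩
  · intro h0
    have hpow : (M ^ n).mulVec x = μ ^ n • x := mulVec_pow_eig M x μ hMx n
    have hq : Q.mulVec (P.mulVec x) = μ ^ n • x := by
      rw [Matrix.mulVec_mulVec, h2, hpow]
    rw [h0, Matrix.mulVec_zero] at hq
    have := hq.symm
    rw [smul_eq_zero] at this
    rcases this with h | h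
    · exact pow_ne_zero n hμ h
    · exact hx h
  · rw [Matrix.mulVec_mulVec, ← h1, ← Matrix.mulVec_mulVec, hMx, Matrix.mulVec_smul]

end Helpers
section Core

variable [DecidableEq A]

lemma core (τ : A → List A) (a : A) (X : ℕ → A)
    (hne : Nonerasing τ) {b0 : A} {t0 : List A} (hgrow : τ a = a :: b0 :: t0)
    (hX0 : X 0 = a) (hfix : IsFixedPt τ X)
    (u v : List A) (hu : u ≠ []) (hv : v ≠ [])
    (hpu : IsPrefix X u) (hpv : IsPrefix X v) (hlen : u.length ≤ v.length)
    (τu τv : List A → List (List A))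
    (hτu : RetSub τ X u τu) (hτv : RetSub τ X v τv)
    [Fintype (ReturnWords X u)] [Fintype (ReturnWords X v)] :
    ∀ μ : ℂ, μ ≠ 0 →
      (IsEig (retMat τu (ReturnWords X u)) μ ↔
        IsEig (retMat τv (ReturnWords X v)) μ) := by
  classical
  have huv : u <+: v := prefix_of_prefix_le hpv hpu hlen
  set n := v.length with hn
  set F := wordApply (mPow τ n) with hF
  have hulen : 1 ≤ u.length := List.length_pos_iff.mpr hu
  have hua : ∃ u', u = a :: u' := by
    have hpu' : word X 0 u.length = u := hpu
    obtain ⟨m, hm⟩ := Nat.exists_eq_add_of_le hulen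
    have h2 : word X 0 (1 + m) = u := by rw [← hm]; exact hpu
    refine ⟨word X 1 m, ?_⟩
    rw [← h2, word_append]
    have h01 : word X 0 1 = [a] := by
      show (List.range 1).map (fun k => X (0 + k)) = [a]
      have : List.range 1 = [0] := by decide
      rw [this]
      simp [hX0]
    rw [h01, Nat.zero_add]
    rfl
  have hFpre : word X 0 (F u).length = F u := by
    have hpu' : word X 0 u.length = u := hpu
    have h := mpow_prefix (X := X) hfix n u.length
    rw [hpu'] at h
    rw [hF]
    exact h
  have hFlen : n + 1 ≤ (F u).length := by
    obtain ⟨u', rfl⟩ := hua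
    have h1 : F (a :: u') = mPow τ n a ++ (u'.flatMap (mPow τ n)) := by
      rw [hF]
      show (a :: u').flatMap (mPow τ n) = _
      rw [List.flatMap_cons]
    rw [h1, List.length_append]
    have := mPow_length_ge hne hgrow n
    omega
  have hvFu : v <+: F u :=
    prefix_of_prefix_le (show IsPrefix X (F u) from hFpre) hpv (by omega)
  -- decomposition of return words on v into return words on u
  have hdecU0 : ∀ r : List A, ∃ l : List (List A),
      r ∈ ReturnWords X v → ((∀ x ∈ l, x ∈ ReturnWords X u) ∧ l.flatten = r) := by
    intro r
    by_cases hr : r ∈ ReturnWords X v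
    · obtain ⟨i, j, hi, hj, hij, hbet, rfl⟩ := hr
      have hui : OccursAt X u i := occursAt_of_prefix hi huv
      have huj : OccursAt X u j := occursAt_of_prefix hj huv
      obtain ⟨l, hl1, hl2⟩ := dec_exists (u := u) (j - i) i hui (by
        have hji : i + (j - i) = j := by omega
        rw [hji]; exact huj)
      exact ⟨l, fun _ => ⟨hl1, hl2⟩⟩
    · exact ⟨[], fun h => absurd h hr⟩
  choose decU hdecU using hdecU0
  -- decomposition of τ^n-images of return words on u into return words on v
  have hdecK0 : ∀ r : List A, ∃ l : List (List A),
      r ∈ ReturnWords X u → ((∀ x ∈ l, x ∈ ReturnWords X v) ∧ l.flatten = F r) := by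
    intro r
    by_cases hr : r ∈ ReturnWords X u
    · obtain ⟨i, j, hi, hj, hij, hbet, rfl⟩ := hr
      have hseg := image_seg (X := X) hfix n (le_of_lt hij)
      have hvi : OccursAt X v (wordApply (mPow τ n) (word X 0 i)).length :=
        occursAt_of_prefix (occ_image hfix n hi) hvFu
      have hvj : OccursAt X v (wordApply (mPow τ n) (word X 0 j)).length :=
        occursAt_of_prefix (occ_image hfix n hj) hvFu
      obtain ⟨l, hl1, hl2⟩ := dec_exists (u := v)
        ((wordApply (mPow τ n) (word X 0 j)).length
          - (wordApply (mPow τ n) (word X 0 i)).length)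
        (wordApply (mPow τ n) (word X 0 i)).length hvi (by
          have hq : (wordApply (mPow τ n) (word X 0 i)).length
              + ((wordApply (mPow τ n) (word X 0 j)).length
                - (wordApply (mPow τ n) (word X 0 i)).length)
              = (wordApply (mPow τ n) (word X 0 j)).length := by
            have := hseg.1
            omega
          rw [hq]; exact hvj)
      refine ⟨l, fun _ => ⟨hl1, ?_⟩⟩
      rw [hl2, hseg.2, hF]
    · exact ⟨[], fun h => absurd h hr⟩
  choose decK hdecK using hdecK0
  set Mu := retMat τu (ReturnWords X u) with hMu
  set Mv := retMat τv (ReturnWords X v) with hMv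
  set L : Matrix ↥(ReturnWords X u) ↥(ReturnWords X v) ℂ :=
    Matrix.of (fun s t => (((decU (t : List A)).count (s : List A) : ℕ) : ℂ)) with hL
  set K : Matrix ↥(ReturnWords X v) ↥(ReturnWords X u) ℂ :=
    Matrix.of (fun s t => (((decK (t : List A)).count (s : List A) : ℕ) : ℂ)) with hK

  have hmemU : ∀ x ∈ ReturnWords X v, ∀ y ∈ decU x, y ∈ ReturnWords X u :=
    fun x hx => (hdecU x hx).1
  have hflatU : ∀ x ∈ ReturnWords X v, (decU x).flatten = x :=
    fun x hx => (hdecU x hx).2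
  have hmemK : ∀ x ∈ ReturnWords X u, ∀ y ∈ decK x, y ∈ ReturnWords X v :=
    fun x hx => (hdecK x hx).1
  have hflatK : ∀ x ∈ ReturnWords X u, (decK x).flatten = F x :=
    fun x hx => (hdecK x hx).2
  have hmemTu : ∀ x ∈ ReturnWords X u, ∀ y ∈ τu x, y ∈ ReturnWords X u :=
    fun x hx => (hτu x hx).1
  have hmemTv : ∀ x ∈ ReturnWords X v, ∀ y ∈ τv x, y ∈ ReturnWords X v :=
    fun x hx => (hτv x hx).1
  -- identity 1 : L * Mv = Mu * L
  have hId1 : L * Mv = Mu * L := by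
    ext s r
    rw [Matrix.mul_apply, Matrix.mul_apply]
    simp only [hL, hMv, hMu, retMat, Matrix.of_apply]
    rw [sum_count_eq decU (τv (r : List A)) (hmemTv _ r.2) (s : List A)]
    rw [sum_count_eq τu (decU (r : List A)) (hmemU _ r.2) (s : List A)]
    congr 1
    refine congrArg _ (dec_unique (X := X) (u := u) _ _ ?_ ?_ ?_)
    · intro x hx
      obtain ⟨t, ht, hxt⟩ := List.mem_flatMap.mp hx
      exact hmemU t (hmemTv _ r.2 t ht) x hxt
    · intro x hx
      obtain ⟨t, ht, hxt⟩ := List.mem_flatMap.mp hx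
      exact hmemTu t (hmemU _ r.2 t ht) x hxt
    · rw [flatten_flatMap_eq (g := fun x => x)
        (fun x hx => hflatU x (hmemTv _ r.2 x hx))]
      rw [flatten_flatMap_eq (g := wordApply τ)
        (fun x hx => (hτu x (hmemU _ r.2 x hx)).2)]
      have h1 : (τv (r : List A)).flatMap (fun x => x) = (τv (r : List A)).flatten :=
        List.flatMap_id
      have h2 : (decU (r : List A)).flatMap (wordApply τ)
          = wordApply τ ((decU (r : List A)).flatten) :=
        (wordApply_flatten τ _).symm
      rw [h1, h2, (hτv _ r.2).2, hflatU _ r.2]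
  -- identity 2 : K * Mu = Mv * K
  have hId2 : K * Mu = Mv * K := by
    ext s r
    rw [Matrix.mul_apply, Matrix.mul_apply]
    simp only [hK, hMv, hMu, retMat, Matrix.of_apply]
    rw [sum_count_eq decK (τu (r : List A)) (hmemTu _ r.2) (s : List A)]
    rw [sum_count_eq τv (decK (r : List A)) (hmemK _ r.2) (s : List A)]
    congr 1
    refine congrArg _ (dec_unique (X := X) (u := v) _ _ ?_ ?_ ?_)
    · intro x hx
      obtain ⟨t, ht, hxt⟩ := List.mem_flatMap.mp hx
      exact hmemK t (hmemTu _ r.2 t ht) x hxt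
    · intro x hx
      obtain ⟨t, ht, hxt⟩ := List.mem_flatMap.mp hx
      exact hmemTv t (hmemK _ r.2 t ht) x hxt
    · rw [flatten_flatMap_eq (g := F)
        (fun x hx => hflatK x (hmemTu _ r.2 x hx))]
      rw [flatten_flatMap_eq (g := wordApply τ)
        (fun x hx => (hτv x (hmemK _ r.2 x hx)).2)]
      have h1 : (τu (r : List A)).flatMap F
          = F ((τu (r : List A)).flatten) := by
        rw [hF]
        exact (wordApply_flatten _ _).symm
      have h2 : (decK (r : List A)).flatMap (wordApply τ)
          = wordApply τ ((decK (r : List A)).flatten) :=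
        (wordApply_flatten τ _).symm
      rw [h1, h2, (hτu _ r.2).2, hflatK _ r.2, hF]
      rw [← wordApply_mPow_succ', ← wordApply_mPow_succ]
  -- identity 3 : L * K = Mu ^ n
  have hId3 : L * K = Mu ^ n := by
    ext s r
    rw [Matrix.mul_apply]
    rw [hMu, retMat_pow (S := ReturnWords X u) (σS := τu) hmemTu n s r]
    simp only [hL, hK, Matrix.of_apply]
    rw [sum_count_eq decU (decK (r : List A)) (hmemK _ r.2) (s : List A)]
    congr 1
    refine congrArg _ (dec_unique (X := X) (u := u) _ _ ?_ ?_ ?_)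
    · intro x hx
      obtain ⟨t, ht, hxt⟩ := List.mem_flatMap.mp hx
      exact hmemU t (hmemK _ r.2 t ht) x hxt
    · exact Tpow_mem hmemTu n (r : List A) r.2
    · rw [flatten_flatMap_eq (g := fun x => x)
        (fun x hx => hflatU x (hmemK _ r.2 x hx))]
      have h1 : (decK (r : List A)).flatMap (fun x => x) = (decK (r : List A)).flatten :=
        List.flatMap_id
      rw [h1, hflatK _ r.2, Tpow_flatten hmemTu (fun w hw => (hτu w hw).2) n _ r.2, hF]
  -- identity 4 : K * L = Mv ^ n
  have hId4 : K * L = Mv ^ n := by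
    ext s r
    rw [Matrix.mul_apply]
    rw [hMv, retMat_pow (S := ReturnWords X v) (σS := τv) hmemTv n s r]
    simp only [hL, hK, Matrix.of_apply]
    rw [sum_count_eq decK (decU (r : List A)) (hmemU _ r.2) (s : List A)]
    congr 1
    refine congrArg _ (dec_unique (X := X) (u := v) _ _ ?_ ?_ ?_)
    · intro x hx
      obtain ⟨t, ht, hxt⟩ := List.mem_flatMap.mp hx
      exact hmemK t (hmemU _ r.2 t ht) x hxt
    · exact Tpow_mem hmemTv n (r : List A) r.2
    · rw [flatten_flatMap_eq (g := F)
        (fun x hx => hflatK x (hmemU _ r.2 x hx))]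
      have h1 : (decU (r : List A)).flatMap F
          = F ((decU (r : List A)).flatten) := by
        rw [hF]
        exact (wordApply_flatten _ _).symm
      rw [h1, hflatU _ r.2, Tpow_flatten hmemTv (fun w hw => (hτv w hw).2) n _ r.2, hF]
  intro mu hmu
  constructor
  · exact eig_transfer Mu Mv K L n hId2 hId3 hmu
  · exact eig_transfer Mv Mu L K n hId1 hId4 hmu

end Core
section Degenerate

variable [DecidableEq A]

lemma degen (τ : A → List A) (a : A) (X : ℕ → A)
    (hτa : τ a = [a]) (hprim : Primitive τ) (hX0 : X 0 = a)
    (w : List A) (hw : w ≠ []) (hpw : IsPrefix X w)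
    (τw : List A → List (List A)) (hτw : RetSub τ X w τw)
    [Fintype (ReturnWords X w)] :
    ∀ μ : ℂ, IsEig (retMat τw (ReturnWords X w)) μ ↔ μ = 1 := by
  -- every letter equals a
  obtain ⟨k, hk, hall⟩ := hprim
  have hmp : ∀ m, mPow τ m a = [a] := by
    intro m
    induction m with
    | zero => rfl
    | succ m ih =>
      show wordApply τ (mPow τ m a) = [a]
      rw [ih]
      show [a].flatMap τ = [a]
      rw [List.flatMap_singleton, hτa]
  have hba : ∀ b : A, b = a := by
    intro b
    have := hall a b
    rw [hmp k] at this
    simpa using this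
  have hXa : ∀ m, X m = a := fun m => hba (X m)
  have hwordrep : ∀ p m, word X p m = List.replicate m a := by
    intro p m
    have hlen : (word X p m).length = m := word_length _ _ _
    conv_rhs => rw [← hlen]
    apply List.eq_replicate_of_mem
    intro x hx
    simp only [word, List.mem_map] at hx
    obtain ⟨q, _, rfl⟩ := hx
    exact hXa _
  have hw0 : w = List.replicate w.length a := by
    have h := hwordrep 0 w.length
    have h2 : word X 0 w.length = w := hpw
    rw [h2] at h
    exact h
  have hocc : ∀ p, OccursAt X w p := by
    intro p
    show word X p w.length = w
    rw [hwordrep p w.length]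
    exact hw0.symm
  have hmema : [a] ∈ ReturnWords X w := by
    refine ⟨0, 1, hocc 0, hocc 1, one_pos, ?_, ?_⟩
    · intro k h1 h2
      omega
    · rw [hwordrep]
      rfl
  have hsub : ∀ r ∈ ReturnWords X w, r = [a] := by
    rintro r ⟨i, j, _, _, hij, hbet, rfl⟩
    have hj1 : j = i + 1 := by
      by_contra hne2
      exact hbet (i + 1) (by omega) (by omega) (hocc (i + 1))
    subst hj1
    rw [hwordrep]
    have : i + 1 - i = 1 := by omega
    rw [this]
    rfl
  obtain ⟨hmem1, hflat1⟩ := hτw [a] hmema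
  have hτwa : τw [a] = [[a]] := by
    have hflat : (τw [a]).flatten = [a] := by
      rw [hflat1]
      show [a].flatMap τ = [a]
      rw [List.flatMap_singleton, hτa]
    rcases hl : τw [a] with _ | ⟨x, t⟩
    · rw [hl] at hflat
      simp at hflat
    · have hx : x = [a] := hsub x (hmem1 x (by rw [hl]; simp))
      rw [hl] at hflat
      rw [hx] at hflat
      simp only [List.flatten_cons] at hflat
      have ht : t.flatten = [] := by
        have : a :: t.flatten = [a] := hflat
        exact (List.cons.injEq _ _ _ _).mp this |>.2
      have ht2 : t = [] := by
        cases t with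
        | nil => rfl
        | cons y t' =>
          exfalso
          have hy : y = [a] := hsub y (hmem1 y (by rw [hl]; simp))
          rw [List.flatten_cons, hy] at ht
          simp at ht
      rw [hx, ht2]
  have helem : ∀ s : ↥(ReturnWords X w), (s : List A) = [a] := fun s => hsub s s.2
  have hent : ∀ s t : ↥(ReturnWords X w), retMat τw (ReturnWords X w) s t = 1 := by
    intro s t
    show (((τw (t : List A)).count (s : List A) : ℕ) : ℂ) = 1
    rw [helem s, helem t, hτwa]
    simp
  haveI huniq : Unique ↥(ReturnWords X w) :=
    ⟨⟨⟨[a], hmema⟩⟩, fun s => Subtype.ext (helem s)⟩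
  have hmv : ∀ x : ↥(ReturnWords X w) → ℂ,
      (retMat τw (ReturnWords X w)).mulVec x = fun _ => x default := by
    intro x
    funext s
    show ∑ t, retMat τw (ReturnWords X w) s t * x t = x default
    rw [Finset.univ_unique, Finset.sum_singleton, hent, one_mul]
  intro μ
  constructor
  · rintro ⟨x, hx, hmul⟩
    have hxe : x default ≠ 0 := by
      intro h0
      apply hx
      funext s
      rw [Unique.eq_default s]
      exact h0
    have h1 := congrFun hmul default
    rw [hmv x] at h1
    have h2 : x default = μ * x default := h1
    have h3 : (μ - 1) * x default = 0 := by linear_combination -h2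
    rcases mul_eq_zero.mp h3 with h4 | h4
    · exact sub_eq_zero.mp h4
    · exact absurd h4 hxe
  · rintro rfl
    refine ⟨fun _ => 1, ?_, ?_⟩
    · intro h0
      have := congrFun h0 default
      simp at this
    · rw [hmv]
      funext s
      simp

end Degenerate
theorem stmt9 {A : Type*} [DecidableEq A] (τ : A → List A) (a : A) (X : ℕ → A)
    (hne : Nonerasing τ) (hhead : (τ a).head? = some a) (hprim : Primitive τ)
    (hX0 : X 0 = a) (hfix : IsFixedPt τ X)
    (u v : List A) (hu : u ≠ []) (hv : v ≠ [])
    (hpu : IsPrefix X u) (hpv : IsPrefix X v)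
    (τu τv : List A → List (List A))
    (hτu : RetSub τ X u τu) (hτv : RetSub τ X v τv)
    [Fintype (ReturnWords X u)] [Fintype (ReturnWords X v)] :
    ∀ μ : ℂ, μ ≠ 0 →
      (IsEig (retMat τu (ReturnWords X u)) μ ↔
        IsEig (retMat τv (ReturnWords X v)) μ) := by
  intro μ hμ
  by_cases hdeg : τ a = [a]
  · rw [degen τ a X hdeg hprim hX0 u hu hpu τu hτu μ,
      degen τ a X hdeg hprim hX0 v hv hpv τv hτv μ]
  · have hex : ∃ b0 t0, τ a = a :: b0 :: t0 := by
      cases hta : τ a with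
      | nil =>
        rw [hta] at hhead
        simp at hhead
      | cons x t =>
        have hx : x = a := by
          rw [hta] at hhead
          simpa using hhead
        subst hx
        cases t with
        | nil => exact absurd hta hdeg
        | cons y t' => exact ⟨y, t', rfl⟩
    obtain ⟨b0, t0, hgrow⟩ := hex
    rcases le_total u.length v.length with hle | hle
    · exact core τ a X hne hgrow hX0 hfix u v hu hv hpu hpv hle τu τv hτu hτv μ hμ
    · exact (core τ a X hne hgrow hX0 hfix v u hv hu hpv hpu hle τv τu hτv hτu μ hμ).symm
end Cobham
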